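/- Let q be an odd prime power. The number of involutions in PSL(2,q) is (q^2-q)/2 if q ≡ 3 (mod 4), and (q^2+q)/2 if q ≡ 1 (mod 4). -/

import Mathlib

open Matrix Finset
open scoped MatrixGroups Classical

namespace Stmt10Aux

variable {F : Type*} [Field F] [Fintype F]

instance : Fact (Even (Fintype.card (Fin 2))) := ⟨by simp⟩



instance : Fact (Even (Fintype.card (Fin 2))) := ⟨by simp⟩

lemma center_eq (A : SL(2,F)) :
    A ∈ Subgroup.center (SL(2,F)) ↔ A = 1 ∨ A = -1 := by
  rw [Matrix.SpecialLinearGroup.mem_center_iff]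
  constructor
  · rintro ⟨r, hr, hA⟩
    rw [Fintype.card_fin, sq, mul_self_eq_one_iff] at hr
    rcases hr with rfl | rfl
    · left; ext i j; simp [← hA]
    · right; ext i j
      simp only [← hA, Matrix.SpecialLinearGroup.coe_neg, scalar_apply,
        Matrix.diagonal_apply, Matrix.neg_apply, Matrix.one_apply]
      split_ifs <;> simp [Matrix.SpecialLinearGroup.coe_one, Matrix.one_apply, *]
  · rintro (rfl | rfl)
    · exact ⟨1, by simp⟩
    · refine ⟨-1, by simp [Fintype.card_fin], ?_⟩
      ext i j
      simp only [Matrix.SpecialLinearGroup.coe_neg, scalar_apply,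
        Matrix.diagonal_apply, Matrix.neg_apply, Matrix.one_apply]
      split_ifs <;> simp [Matrix.SpecialLinearGroup.coe_one, Matrix.one_apply, *]




instance : Fact (Even (Fintype.card (Fin 2))) := ⟨by simp⟩

lemma coe_neg_entry (g : SL(2,F)) (i j : Fin 2) :
    ((-g : SL(2,F)) : Matrix (Fin 2) (Fin 2) F) i j = -(g : Matrix (Fin 2) (Fin 2) F) i j := by
  rw [Matrix.SpecialLinearGroup.coe_neg]; simp

lemma det_rel (g : SL(2,F)) :
    (g : Matrix (Fin 2) (Fin 2) F) 0 0 * g 1 1 - g 0 1 * g 1 0 = 1 := by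
  have := g.prop
  rwa [Matrix.det_fin_two] at this

lemma one_ne_neg_one (h2 : (2:F) ≠ 0) : (1 : SL(2,F)) ≠ -1 := by
  intro h
  have := congrFun (congrFun (congrArg Subtype.val h) 0) 0
  rw [coe_neg_entry] at this
  simp only [Matrix.SpecialLinearGroup.coe_one, Matrix.one_apply_eq] at this
  exact h2 (by linear_combination this)

lemma ne_neg_self (h2 : (2:F) ≠ 0) (g : SL(2,F)) : g ≠ -g := by
  intro h
  have hc : ∀ i j : Fin 2, (g : Matrix (Fin 2) (Fin 2) F) i j = 0 := by
    intro i j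
    have := congrFun (congrFun (congrArg Subtype.val h) i) j
    rw [coe_neg_entry] at this
    have h2' : (2:F) * (g : Matrix (Fin 2) (Fin 2) F) i j = 0 := by linear_combination this
    rcases mul_eq_zero.mp h2' with h' | h'
    · exact absurd h' h2
    · exact h'
  have := det_rel g
  rw [hc, hc, hc, hc] at this
  simp at this

lemma inv_entries (g : SL(2,F)) :
    ((g⁻¹ : SL(2,F)) : Matrix (Fin 2) (Fin 2) F) =
      ![![g 1 1, -g 0 1], ![-g 1 0, g 0 0]] := by
  rw [Matrix.SpecialLinearGroup.SL2_inv_expl]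

lemma sq_eq_one (h2 : (2:F) ≠ 0) {g : SL(2,F)} (hg : g * g = 1) : g = 1 ∨ g = -1 := by
  have hinv : g⁻¹ = g := inv_eq_of_mul_eq_one_left hg
  have e : ((g⁻¹ : SL(2,F)) : Matrix (Fin 2) (Fin 2) F) = g := congrArg Subtype.val hinv
  rw [inv_entries] at e
  have e01 : -(g : Matrix (Fin 2) (Fin 2) F) 0 1 = g 0 1 := by
    have := congrFun (congrFun e 0) 1; simpa using this
  have e10 : -(g : Matrix (Fin 2) (Fin 2) F) 1 0 = g 1 0 := by
    have := congrFun (congrFun e 1) 0; simpa using this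
  have e00 : (g : Matrix (Fin 2) (Fin 2) F) 1 1 = g 0 0 := by
    have := congrFun (congrFun e 0) 0; simpa using this
  have hb : (g : Matrix (Fin 2) (Fin 2) F) 0 1 = 0 := by
    rcases mul_eq_zero.mp (show (2:F) * (g : Matrix (Fin 2) (Fin 2) F) 0 1 = 0 by
      linear_combination -e01) with h | h
    · exact absurd h h2
    · exact h
  have hcz : (g : Matrix (Fin 2) (Fin 2) F) 1 0 = 0 := by
    rcases mul_eq_zero.mp (show (2:F) * (g : Matrix (Fin 2) (Fin 2) F) 1 0 = 0 by
      linear_combination -e10) with h | h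
    · exact absurd h h2
    · exact h
  have hdet := det_rel g
  rw [hb, hcz, e00] at hdet
  have ha : (g : Matrix (Fin 2) (Fin 2) F) 0 0 = 1 ∨ (g : Matrix (Fin 2) (Fin 2) F) 0 0 = -1 := by
    rw [← mul_self_eq_one_iff]; linear_combination hdet
  rcases ha with ha | ha
  · left; ext i j
    fin_cases i <;> fin_cases j <;>
      simp_all [Matrix.SpecialLinearGroup.coe_one, Matrix.one_apply]
  · right; ext i j
    fin_cases i <;> fin_cases j <;>
      simp_all [coe_neg_entry, Matrix.SpecialLinearGroup.coe_one, Matrix.one_apply]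

lemma sq_eq_neg_one_iff (g : SL(2,F)) :
    g * g = -1 ↔ (g : Matrix (Fin 2) (Fin 2) F) 1 1 = -(g : Matrix (Fin 2) (Fin 2) F) 0 0 := by
  constructor
  · intro hg
    have h1 : g * (-g) = 1 := by rw [mul_neg, hg, neg_neg]
    have hinv : g⁻¹ = -g := inv_eq_of_mul_eq_one_right h1
    have e : ((g⁻¹ : SL(2,F)) : Matrix (Fin 2) (Fin 2) F) = ((-g : SL(2,F)) : _) :=
      congrArg Subtype.val hinv
    rw [inv_entries] at e
    have := congrFun (congrFun e 0) 0
    rw [coe_neg_entry] at this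
    simpa using this
  · intro h
    have hdet := det_rel g
    ext i j
    rw [Matrix.SpecialLinearGroup.coe_mul, coe_neg_entry]
    fin_cases i <;> fin_cases j <;>
      simp [Matrix.mul_apply, Fin.sum_univ_two, Matrix.SpecialLinearGroup.coe_one,
        Matrix.one_apply]
    · linear_combination -hdet + (g : Matrix (Fin 2) (Fin 2) F) 0 0 * h
    · linear_combination (g : Matrix (Fin 2) (Fin 2) F) 0 1 * h
    · linear_combination (g : Matrix (Fin 2) (Fin 2) F) 1 0 * h
    · linear_combination -hdet + (g : Matrix (Fin 2) (Fin 2) F) 1 1 * h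







local notation "Z" => Subgroup.center (SL(2,F))
local notation "Q" => SL(2,F) ⧸ Subgroup.center (SL(2,F))

lemma mk_neg (g : SL(2,F)) : ((-g : SL(2,F)) : Q) = (g : Q) := by
  rw [QuotientGroup.eq]
  have : (-g)⁻¹ * g = -1 := by rw [inv_neg, neg_mul, inv_mul_cancel]
  rw [this, center_eq]
  right; rfl

lemma order_two_of_sq_neg_one (h2 : (2:F) ≠ 0) {g : SL(2,F)} (hg : g * g = -1) :
    orderOf (g : Q) = 2 := by
  have hpow : (g : Q) ^ 2 = 1 := by
    rw [sq, ← QuotientGroup.mk_mul, hg, QuotientGroup.eq_one_iff, center_eq]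
    right; rfl
  have hne : (g : Q) ≠ 1 := by
    rw [Ne, QuotientGroup.eq_one_iff, center_eq]
    rintro (rfl | rfl)
    · exact one_ne_neg_one h2 (by rw [← hg, mul_one])
    · exact one_ne_neg_one h2 (by rw [← hg, neg_mul_neg, mul_one])
  exact orderOf_eq_prime hpow hne

lemma sq_neg_one_of_order_two (h2 : (2:F) ≠ 0) {x : Q} (hx : orderOf x = 2) :
    x.out * x.out = -1 := by
  have hxo : ((x.out : SL(2,F)) : Q) = x := QuotientGroup.out_eq' x
  have hx1 : x ^ 2 = 1 := by rw [← pow_orderOf_eq_one x, hx]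
  have hmem : x.out * x.out ∈ Z := by
    rw [← QuotientGroup.eq_one_iff, QuotientGroup.mk_mul, hxo, ← sq, hx1]
  rcases (center_eq _).mp hmem with h | h
  · exfalso
    rcases sq_eq_one h2 h with h1 | h1
    · have : x = 1 := by rw [← hxo, h1]; rfl
      rw [this, orderOf_one] at hx; norm_num at hx
    · have : x = 1 := by
        rw [← hxo, h1, ← mk_neg, neg_neg]; rfl
      rw [this, orderOf_one] at hx; norm_num at hx
  · exact h

open scoped Classical in
noncomputable def phi (h2 : (2:F) ≠ 0) :
    {x : Q // orderOf x = 2} × Bool → {g : SL(2,F) // g * g = -1} :=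
  fun ⟨x, b⟩ =>
    ⟨if b then x.1.out else -x.1.out, by
      have := sq_neg_one_of_order_two h2 x.2
      cases b <;> simp [this, neg_mul_neg]⟩

lemma phi_bijective (h2 : (2:F) ≠ 0) : Function.Bijective (phi (F := F) h2) := by
  constructor
  · rintro ⟨x, b⟩ ⟨y, c⟩ h
    have hval : (if b then x.1.out else -x.1.out) = (if c then y.1.out else -y.1.out) :=
      congrArg Subtype.val h
    have hq : x.1 = y.1 := by
      have := congrArg (QuotientGroup.mk (s := Z)) hval
      rcases Bool.dichotomy b with rfl | rfl <;> rcases Bool.dichotomy c with rfl | rfl <;>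
        simpa [mk_neg, QuotientGroup.out_eq'] using this
    have houts : x.1.out = y.1.out := by rw [hq]
    have hbc : b = c := by
      rcases Bool.dichotomy b with rfl | rfl <;> rcases Bool.dichotomy c with rfl | rfl <;>
        simp_all
      · exact absurd hval.symm (ne_neg_self h2 _)
      · exact absurd hval (ne_neg_self h2 _)
    exact Prod.ext (Subtype.ext hq) hbc
  · rintro ⟨g, hg⟩
    set x : Q := (g : Q) with hxdef
    have hord : orderOf x = 2 := order_two_of_sq_neg_one h2 hg
    have : ((x.out : SL(2,F)) : Q) = (g : Q) := QuotientGroup.out_eq' x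
    rw [QuotientGroup.eq] at this
    rcases (center_eq _).mp this with h | h
    · refine ⟨⟨⟨x, hord⟩, true⟩, ?_⟩
      apply Subtype.ext
      simp only [phi, if_true]
      have : x.out = g := by
        have := congrArg (fun z => x.out * z) h
        simpa [mul_inv_cancel_left] using this.symm
      exact this
    · refine ⟨⟨⟨x, hord⟩, false⟩, ?_⟩
      apply Subtype.ext
      simp only [phi, if_false, Bool.false_eq_true]
      have hge : -x.out = g := by
        have := congrArg (fun z => x.out * z) h
        simpa [mul_inv_cancel_left, mul_neg, mul_one] using this.symm
      exact hge

lemma card_T_eq (h2 : (2:F) ≠ 0) :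
    Nat.card {g : SL(2,F) // g * g = -1} = 2 * Nat.card {x : Q // orderOf x = 2} := by
  rw [← Nat.card_eq_of_bijective _ (phi_bijective h2), Nat.card_prod]
  simp [mul_comm]







noncomputable def traceZeroEquiv :
    {g : SL(2,F) // g * g = -1} ≃ Σ ab : F × F, {c : F // ab.2 * c = -(1 + ab.1 * ab.1)} where
  toFun := fun ⟨g, hg⟩ =>
    ⟨((g : Matrix (Fin 2) (Fin 2) F) 0 0, (g : Matrix (Fin 2) (Fin 2) F) 0 1),
      (g : Matrix (Fin 2) (Fin 2) F) 1 0, by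
        have hd := det_rel g
        have h11 := (sq_eq_neg_one_iff g).mp hg
        dsimp only
        linear_combination -hd + (g : Matrix (Fin 2) (Fin 2) F) 0 0 * h11⟩
  invFun := fun ⟨⟨a, b⟩, ⟨c, h⟩⟩ =>
    ⟨⟨!![a, b; c, -a], by
        rw [Matrix.det_fin_two_of]
        dsimp only at h
        linear_combination -h⟩, by
      refine (sq_eq_neg_one_iff _).mpr ?_
      simp⟩
  left_inv := by
    rintro ⟨g, hg⟩
    have h11 := (sq_eq_neg_one_iff g).mp hg
    apply Subtype.ext
    apply Subtype.ext
    dsimp only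
    ext i j
    fin_cases i <;> fin_cases j <;> simp [h11]
  right_inv := by
    rintro ⟨⟨a, b⟩, ⟨c, h⟩⟩
    simp

lemma card_c_solutions (b k : F) :
    Fintype.card {c : F // b * c = k} =
      if b = 0 then (if k = 0 then Fintype.card F else 0) else 1 := by
  split_ifs with hb hk
  · subst hb; subst hk
    rw [Fintype.card_congr (Equiv.subtypeUnivEquiv (fun c => by simp))]
  · rw [Fintype.card_eq_zero_iff]
    exact ⟨fun ⟨c, hc⟩ => hk (by simpa [hb] using hc.symm)⟩
  · haveI : Unique {c : F // b * c = k} :=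
      { default := ⟨b⁻¹ * k, by field_simp⟩
        uniq := fun ⟨c, hc⟩ => Subtype.ext (by field_simp; rw [mul_comm]; exact hc) }
    exact Fintype.card_unique

lemma card_T (q : ℕ) (hF : Fintype.card F = q) :
    Nat.card {g : SL(2,F) // g * g = -1} =
      (univ.filter (fun a : F => 1 + a * a = 0)).card * q + q * (q - 1) := by
  rw [Nat.card_eq_fintype_card, Fintype.card_congr (traceZeroEquiv (F := F)),
    Fintype.card_sigma]
  rw [Fintype.sum_prod_type]
  have inner : ∀ a : F, (∑ b : F, Fintype.card {c : F // b * c = -(1 + a * a)})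
      = (if 1 + a * a = 0 then q else 0) + (q - 1) := by
    intro a
    have : ∀ b : F, Fintype.card {c : F // b * c = -(1 + a * a)} =
        if b = 0 then (if 1 + a * a = 0 then q else 0) else 1 := by
      intro b
      rw [card_c_solutions]
      congr 1
      simp only [hF]
      rw [neg_eq_zero]
    rw [Finset.sum_congr rfl (fun b _ => this b), Finset.sum_ite]
    simp only [Finset.sum_const, smul_eq_mul, mul_one]
    rw [Finset.filter_eq' univ (0:F), if_pos (mem_univ _)]
    have : (univ.filter (fun b : F => ¬ b = 0)).card = q - 1 := by
      rw [Finset.filter_not, Finset.filter_eq' univ (0:F), if_pos (mem_univ _)]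
      rw [Finset.card_sdiff_of_subset (by simp), Finset.card_singleton, Finset.card_univ, hF]
    rw [this, Finset.card_singleton, one_mul]
  rw [Finset.sum_congr rfl (fun a _ => inner a)]
  rw [Finset.sum_add_distrib, Finset.sum_const, Finset.sum_ite, Finset.sum_const,
    Finset.sum_const]
  simp only [smul_eq_mul, mul_zero, add_zero, Finset.card_univ, hF]



lemma roots_three (h3 : Fintype.card F % 4 = 3) :
    (univ.filter (fun a : F => 1 + a * a = 0)).card = 0 := by
  rw [Finset.card_eq_zero, Finset.filter_eq_empty_iff]
  intro a _ ha
  have : IsSquare (-1 : F) := ⟨a, by linear_combination -ha⟩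
  exact (FiniteField.isSquare_neg_one_iff.mp this) h3

lemma roots_one (h2 : (2:F) ≠ 0) (h1 : Fintype.card F % 4 = 1) :
    (univ.filter (fun a : F => 1 + a * a = 0)).card = 2 := by
  obtain ⟨z, hz⟩ : IsSquare (-1 : F) :=
    FiniteField.isSquare_neg_one_iff.mpr (by omega)
  have hzne : z ≠ -z := by
    intro h
    have hz0 : z = 0 := by
      rcases mul_eq_zero.mp (show (2:F) * z = 0 by linear_combination h) with h' | h'
      · exact absurd h' h2
      · exact h'
    rw [hz0, mul_zero] at hz
    exact one_ne_zero (α := F) (by linear_combination -hz)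
  have : (univ.filter (fun a : F => 1 + a * a = 0)) = {z, -z} := by
    ext a
    simp only [mem_filter, mem_univ, true_and, mem_insert, mem_singleton]
    constructor
    · intro ha
      have : (a - z) * (a + z) = 0 := by linear_combination ha + hz
      rcases mul_eq_zero.mp this with h' | h'
      · left; linear_combination h'
      · right; linear_combination h'
    · rintro (rfl | rfl) <;> linear_combination -hz
  rw [this, Finset.card_insert_of_notMem (by simpa using hzne), Finset.card_singleton]

end Stmt10Aux

theorem stmt10 (p e q : ℕ) (hp : p.Prime) (hodd : Odd q) (he : 0 < e) (hq : q = p ^ e)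
    (F : Type*) [Field F] [Fintype F] (hF : Fintype.card F = q) :
    (q % 4 = 3 →
      Nat.card {x : Matrix.SpecialLinearGroup (Fin 2) F ⧸
          Subgroup.center (Matrix.SpecialLinearGroup (Fin 2) F) // orderOf x = 2}
        = (q ^ 2 - q) / 2) ∧
    (q % 4 = 1 →
      Nat.card {x : Matrix.SpecialLinearGroup (Fin 2) F ⧸
          Subgroup.center (Matrix.SpecialLinearGroup (Fin 2) F) // orderOf x = 2}
        = (q ^ 2 + q) / 2) := by
  have hq2 : 2 ≤ q := by
    rw [hq]
    calc 2 ≤ p := hp.two_le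
    _ ≤ p ^ e := Nat.le_self_pow he.ne' p
  have hqodd : q % 2 = 1 := Nat.odd_iff.mp hodd
  have hchar : ringChar F ≠ 2 := by
    intro h
    have h' := FiniteField.even_card_iff_char_two.mp h
    rw [hF] at h'
    omega
  have h2F : (2:F) ≠ 0 := Ring.two_ne_zero hchar
  have hTE := Stmt10Aux.card_T_eq (F := F) h2F
  have hT := Stmt10Aux.card_T (F := F) q hF
  have hpow : q ^ 2 = q * q := sq q
  have hms : q * (q - 1) = q * q - q := by rw [Nat.mul_sub, mul_one]
  have hle : q ≤ q * q := Nat.le_mul_of_pos_left q (by omega)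
  obtain ⟨m, hm⟩ : ∃ m, m = q * q := ⟨_, rfl⟩
  constructor
  · intro h3
    rw [Stmt10Aux.roots_three (by rw [hF]; exact h3), zero_mul, zero_add, hms, ← hm] at hT
    rw [hT] at hTE
    rw [hpow, ← hm]
    omega
  · intro h1
    rw [Stmt10Aux.roots_one h2F (by rw [hF]; exact h1), hms, ← hm] at hT
    rw [hT] at hTE
    rw [hpow, ← hm]
    omega
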